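/- For any integers C ≥ 2, i ≥ 1 and m ≥ 1, the number of tuples (a_1,…,a_{m+i}) ∈ {0,1,…,C−1}^{m+i} such that f_i(a_t, a_{t+1}, …, a_{t+i}) is even for every t with 1 ≤ t ≤ m, is at most (2/3)^m · C^{m+i}. Equivalently: if a_1,…,a_{m+i} are chosen independently and uniformly at random from {0,…,C−1}, the probability that all m of the terms in positions 1,…,m after i iterations of consecutive differencing are even is at most (2/3)^m. -/
import Mathlib

/-- `iterDiff i a` is the sequence obtained from `a` after `i` iterations of
consecutive differencing: `iterDiff i a r = f_i(a_r, a_{r+1}, …, a_{r+i})`. -/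
def iterDiff (i : ℕ) (a : ℕ → ℕ) : ℕ → ℕ :=
  (fun b n => Nat.dist (b n) (b (n + 1)))^[i] a

/-- Extend a tuple `x ∈ {0,…,C−1}^M` to a sequence `ℕ → ℕ` (by `0` outside). -/
def extend (M C : ℕ) (x : Fin M → Fin C) : ℕ → ℕ :=
  fun n => if h : n < M then (x ⟨n, h⟩ : ℕ) else 0

lemma dist_mod2 (a b : ℕ) : Nat.dist a b % 2 = (a + b) % 2 := by
  unfold Nat.dist; omega

lemma iterDiff_succ (i : ℕ) (a : ℕ → ℕ) :
    iterDiff (i + 1) a = iterDiff i (fun n => Nat.dist (a n) (a (n + 1))) := by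
  simp [iterDiff, Function.iterate_succ_apply]

lemma parity_iff (i : ℕ) : ∀ (a a' : ℕ → ℕ) (t : ℕ),
    (∀ j, j < i → a (t + j) = a' (t + j)) →
    (iterDiff i a t % 2 = iterDiff i a' t % 2 ↔ a (t + i) % 2 = a' (t + i) % 2) := by
  induction i with
  | zero => intro a a' t _; simp [iterDiff]
  | succ i ih =>
    intro a a' t h
    rw [iterDiff_succ, iterDiff_succ]
    have hag : ∀ j, j < i →
        (fun n => Nat.dist (a n) (a (n + 1))) (t + j)
          = (fun n => Nat.dist (a' n) (a' (n + 1))) (t + j) := by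
      intro j hj
      simp only
      have h' := h (j + 1) (by omega)
      rw [h j (by omega), Nat.add_assoc t j 1, h']
    have key := ih (fun n => Nat.dist (a n) (a (n + 1)))
      (fun n => Nat.dist (a' n) (a' (n + 1))) t hag
    rw [key]
    beta_reduce
    simp only [← Nat.add_assoc]
    have h1 := dist_mod2 (a (t + i)) (a (t + i + 1))
    have h2 := dist_mod2 (a' (t + i)) (a' (t + i + 1))
    have h3 : a (t + i) = a' (t + i) := h i (Nat.lt_succ_self i)
    omega

/-- For any `C ≥ 2`, `i ≥ 1`, `m ≥ 1`, the number of tuples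
`(a_1,…,a_{m+i}) ∈ {0,…,C−1}^{m+i}` such that `f_i(a_t,…,a_{t+i})` is even for every
`1 ≤ t ≤ m` is at most `(2/3)^m · C^{m+i}`. -/
theorem stmt11 (C : ℕ) (hC : 2 ≤ C) (i : ℕ) (hi : 1 ≤ i) (m : ℕ) (hm : 1 ≤ m) :
    (Nat.card {x : Fin (m + i) → Fin C //
        ∀ t, t < m → Even (iterDiff i (extend (m + i) C x) t)} : ℝ) ≤
      (2 / 3 : ℝ) ^ m * (C : ℝ) ^ (m + i) := by
  set k := (C + 1) / 2 with hk
  let Φ : {x : Fin (m + i) → Fin C //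
        ∀ t, t < m → Even (iterDiff i (extend (m + i) C x) t)} →
      (Fin i → Fin C) × (Fin m → Fin k) :=
    fun x => (fun j => x.1 ⟨(j : ℕ), by have := j.isLt; omega⟩,
              fun t => ⟨(x.1 ⟨(t : ℕ) + i, by have := t.isLt; omega⟩ : ℕ) / 2, by
                have := (x.1 ⟨(t : ℕ) + i, by have := t.isLt; omega⟩).isLt; omega⟩)
  have hΦ : Function.Injective Φ := by
    rintro ⟨x, hx⟩ ⟨y, hy⟩ hxy
    simp only [Φ, Prod.mk.injEq] at hxy
    obtain ⟨h1, h2⟩ := hxy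
    apply Subtype.ext
    funext n
    have main : ∀ N, ∀ hN : N < m + i, x ⟨N, hN⟩ = y ⟨N, hN⟩ := by
      intro N
      induction N using Nat.strong_induction_on with
      | _ N ih =>
        intro hN
        by_cases hNi : N < i
        · exact congrFun h1 ⟨N, hNi⟩
        · obtain ⟨t, rfl⟩ : ∃ t, N = t + i := ⟨N - i, by omega⟩
          have htm : t < m := by omega
          have hagree : ∀ j, j < i → extend (m + i) C x (t + j) = extend (m + i) C y (t + j) := by
            intro j hj
            have hlt : t + j < m + i := by omega
            unfold extend
            rw [dif_pos hlt, dif_pos hlt]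
            exact congrArg Fin.val (ih (t + j) (by omega) hlt)
          have heq : iterDiff i (extend (m + i) C x) t % 2
              = iterDiff i (extend (m + i) C y) t % 2 := by
            rcases hx t htm with ⟨c, hc⟩
            rcases hy t htm with ⟨d, hd⟩
            omega
          have hpar := (parity_iff i (extend (m + i) C x) (extend (m + i) C y) t hagree).mp heq
          have hx2 : extend (m + i) C x (t + i) = (x ⟨t + i, hN⟩ : ℕ) := by
            unfold extend; rw [dif_pos hN]
          have hy2 : extend (m + i) C y (t + i) = (y ⟨t + i, hN⟩ : ℕ) := by
            unfold extend; rw [dif_pos hN]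
          have hdiv : (x ⟨t + i, hN⟩ : ℕ) / 2 = (y ⟨t + i, hN⟩ : ℕ) / 2 :=
            congrArg Fin.val (congrFun h2 ⟨t, htm⟩)
          apply Fin.ext
          rw [hx2, hy2] at hpar
          omega
    have := main n.1 n.isLt
    simpa using this
  have hfin : Nat.card {x : Fin (m + i) → Fin C //
        ∀ t, t < m → Even (iterDiff i (extend (m + i) C x) t)}
      ≤ C ^ i * k ^ m := by
    have hb := Nat.card_le_card_of_injective Φ hΦ
    have : Nat.card ((Fin i → Fin C) × (Fin m → Fin k)) = C ^ i * k ^ m := by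
      simp [Nat.card_eq_fintype_card]
    omega
  have hk2 : 3 * k ≤ 2 * C := by omega
  have hkR : (k : ℝ) ≤ 2 / 3 * C := by
    have := (Nat.cast_le (α := ℝ)).mpr hk2
    push_cast at this
    linarith
  calc (Nat.card {x : Fin (m + i) → Fin C //
        ∀ t, t < m → Even (iterDiff i (extend (m + i) C x) t)} : ℝ)
      ≤ (C : ℝ) ^ i * (k : ℝ) ^ m := by exact_mod_cast hfin
    _ ≤ (C : ℝ) ^ i * (2 / 3 * C) ^ m := by
        gcongr
    _ = (2 / 3 : ℝ) ^ m * (C : ℝ) ^ (m + i) := by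
        rw [mul_pow, pow_add]; ring
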